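/- Let r ≥ 3 and s ≥ 2, and let H be an r-graph on a finite vertex set V containing no bush B_{s,1}(1, r−1). For u ∈ Y ∈ H put Q(Y,u) = { z ∈ V \ Y : (Y \ {u}) ∪ {z} ∈ H }, and assume H is s-normal in the sense that |Q(Y,u)| ≥ s − 1 for every edge Y ∈ H and every u ∈ Y. For each u ∈ Y ∈ H fix a set Q′(Y,u) ⊆ Q(Y,u) with |Q′(Y,u)| = min(s, |Q(Y,u)|). Suppose u ∈ V and P′ ⊆ H is a star with kernel {u} (i.e., P_1 ∩ P_2 = {u} for all distinct P_1, P_2 ∈ P′) with |P′| ≥ r + 2s − 2, which is separable: (⋃_{P∈P′} Q′(P,u)) ∩ (⋃_{P∈P′} P) = ∅. Then there exists a unique set T(u) of size s − 1 such that Q(P,u) = T(u) for every P ∈ P′; moreover, Q(Y,u) = T(u) for every edge Y ∈ H with u ∈ Y and Y ∩ T(u) = ∅. -/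

import Mathlib

/-- An `r`-graph `H` over a vertex type `V` contains the bush `B_{s,h}(a,b)`. -/
def ContainsBush {V : Type*} [DecidableEq V] (a b s h : ℕ) (H : Finset (Finset V)) : Prop :=
  ∃ (A : Finset V) (B : Fin s → Finset V) (P : Fin s → Fin h → Finset V),
    A.card = a ∧ (∀ i, (B i).card = b) ∧ (∀ i j, (P i j).card = a) ∧
    (∀ i, Disjoint A (B i)) ∧ (∀ i j, Disjoint A (P i j)) ∧
    (∀ i i', i ≠ i' → Disjoint (B i) (B i')) ∧
    (∀ i j i' j', (i, j) ≠ (i', j') → Disjoint (P i j) (P i' j')) ∧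
    (∀ i i' j, Disjoint (B i) (P i' j)) ∧
    (∀ i, A ∪ B i ∈ H) ∧ (∀ i j, B i ∪ P i j ∈ H)

/-- Claim 5.2: let `H` be an `s`-normal `r`-graph with no bush `B_{s,1}(1, r-1)`, and let
`𝓟 ⊆ H` be a separable star with kernel `{u}` of size at least `r + 2s - 2`. Then there is
a unique `T(u)` of size `s - 1` with `Q(P, u) = T(u)` for all `P ∈ 𝓟`; moreover
`Q(Y, u) = T(u)` for every edge `Y ∈ H` with `u ∈ Y` and `Y ∩ T(u) = ∅`. -/
theorem unique_replacement_set {V : Type*} [Fintype V] [DecidableEq V]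
    (r s : ℕ) (hr : 3 ≤ r) (hs : 2 ≤ s)
    (H : Finset (Finset V)) (hHcard : ∀ e ∈ H, e.card = r)
    (hbush : ¬ ContainsBush 1 (r - 1) s 1 H)
    (Q : Finset V → V → Finset V)
    (hQdef : ∀ Y u, Q Y u = Finset.univ.filter fun z => z ∉ Y ∧ insert z (Y.erase u) ∈ H)
    (hnormal : ∀ Y ∈ H, ∀ u ∈ Y, s - 1 ≤ (Q Y u).card)
    (Q' : Finset V → V → Finset V)
    (hQ'sub : ∀ Y ∈ H, ∀ u ∈ Y, Q' Y u ⊆ Q Y u)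
    (hQ'card : ∀ Y ∈ H, ∀ u ∈ Y, (Q' Y u).card = min s (Q Y u).card)
    (u : V) (𝓟 : Finset (Finset V)) (h𝓟 : 𝓟 ⊆ H)
    (h𝓟u : ∀ P ∈ 𝓟, u ∈ P)
    (hstar : ∀ P₁ ∈ 𝓟, ∀ P₂ ∈ 𝓟, P₁ ≠ P₂ → P₁ ∩ P₂ = {u})
    (hcard : r + 2 * s - 2 ≤ 𝓟.card)
    (hsep : Disjoint (𝓟.biUnion fun P => Q' P u) (𝓟.biUnion id)) :
    (∃! T : Finset V, T.card = s - 1 ∧ ∀ P ∈ 𝓟, Q P u = T) ∧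
    ∀ T : Finset V, (T.card = s - 1 ∧ ∀ P ∈ 𝓟, Q P u = T) →
      ∀ Y ∈ H, u ∈ Y → Disjoint Y T → Q Y u = T := by
  classical
  -- membership criterion for Q
  have hQmem : ∀ Y u' z, z ∈ Q Y u' ↔ z ∉ Y ∧ insert z (Y.erase u') ∈ H := by
    intro Y u' z
    rw [hQdef]; simp
  -- separability consequence: Q' P u is disjoint from every edge of 𝓟
  have hsep' : ∀ P ∈ 𝓟, ∀ P' ∈ 𝓟, ∀ z ∈ Q' P u, z ∉ P' := by
    intro P hP P' hP' z hz hz'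
    exact (Finset.disjoint_left.mp hsep
      (Finset.mem_biUnion.mpr ⟨P, hP, hz⟩)) (Finset.mem_biUnion.mpr ⟨P', hP', hz'⟩)
  -- the bush builder
  have builder : ∀ (E : Fin s → Finset V) (p : Fin s → V),
      (∀ i, E i ∈ H) → (∀ i, u ∈ E i) →
      (∀ i j, i ≠ j → Disjoint ((E i).erase u) ((E j).erase u)) →
      Function.Injective p → (∀ i j, p i ∉ E j) →
      (∀ i, p i ∈ Q (E i) u) → False := by
    intro E p hEH hEu hdisj hpinj hpE hpQ
    apply hbush
    have hpu : ∀ i, p i ≠ u := fun i h => hpE i i (h ▸ hEu i)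
    refine ⟨{u}, fun i => (E i).erase u, fun i _ => {p i}, by simp, ?_, ?_, ?_, ?_, hdisj,
      ?_, ?_, ?_, ?_⟩
    · intro i; rw [Finset.card_erase_of_mem (hEu i), hHcard _ (hEH i)]
    · intro i j; simp
    · intro i
      simp only [Finset.disjoint_singleton_left]
      exact Finset.notMem_erase u _
    · intro i j
      simp only [Finset.disjoint_singleton_left, Finset.mem_singleton]
      exact fun h => hpu i h.symm
    · intro i j i' j' hne
      have : i ≠ i' := by
        intro h; subst h; exact hne (by ext <;> simp [Subsingleton.elim j j'])
      simp only [Finset.disjoint_singleton_left, Finset.mem_singleton]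
      exact fun h => this (hpinj h)
    · intro i i' j
      simp only [Finset.disjoint_singleton_right]
      exact fun h => hpE i' i (Finset.mem_of_mem_erase h)
    · intro i
      show {u} ∪ (E i).erase u ∈ H
      rw [← Finset.insert_eq, Finset.insert_erase (hEu i)]
      exact hEH i
    · intro i j
      show (E i).erase u ∪ {p i} ∈ H
      rw [Finset.union_comm, ← Finset.insert_eq]
      exact ((hQmem (E i) u (p i)).mp (hpQ i)).2
  -- erased edges of the star are pairwise disjoint
  have herase : ∀ P₁ ∈ 𝓟, ∀ P₂ ∈ 𝓟, P₁ ≠ P₂ →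
      Disjoint (P₁.erase u) (P₂.erase u) := by
    intro P₁ h₁ P₂ h₂ hne
    rw [Finset.disjoint_left]
    intro a ha ha'
    have : a ∈ P₁ ∩ P₂ := Finset.mem_inter.mpr
      ⟨Finset.mem_of_mem_erase ha, Finset.mem_of_mem_erase ha'⟩
    rw [hstar P₁ h₁ P₂ h₂ hne, Finset.mem_singleton] at this
    exact (Finset.mem_erase.mp ha).1 this
  -- core: on any s edges of 𝓟, all the Q' sets coincide and have size s-1
  have core : ∀ t : Finset (Finset V), t ⊆ 𝓟 → t.card = s →
      ∀ P₁ ∈ t, ∀ P₂ ∈ t, Q' P₁ u = Q' P₂ u ∧ (Q' P₁ u).card = s - 1 := by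
    intro t htsub htcard
    have hQ'big : ∀ P ∈ t, s - 1 ≤ (Q' P u).card := by
      intro P hP
      have hPH := h𝓟 (htsub hP)
      have hPu := h𝓟u P (htsub hP)
      rw [hQ'card P hPH u hPu]
      exact le_min (by omega) (hnormal P hPH u hPu)
    -- there is no system of distinct representatives
    have noSDR : ¬ ∃ f : {x // x ∈ t} → V, Function.Injective f ∧
        ∀ x : {x // x ∈ t}, f x ∈ Q' (x : Finset V) u := by
      rintro ⟨f, hfinj, hfmem⟩
      have ε : {x // x ∈ t} ≃ Fin s := t.equivFin.trans (finCongr htcard)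
      refine builder (fun i => (ε.symm i : Finset V)) (fun i => f (ε.symm i))
        (fun i => h𝓟 (htsub (ε.symm i).2)) (fun i => h𝓟u _ (htsub (ε.symm i).2))
        ?_ ?_ ?_ ?_
      · intro i j hij
        refine herase _ (htsub (ε.symm i).2) _ (htsub (ε.symm j).2) ?_
        intro h
        exact hij (by simpa using ε.symm.injective (Subtype.ext h))
      · intro i j h
        exact ε.symm.injective (hfinj h)
      · intro i j
        exact hsep' _ (htsub (ε.symm i).2) _ (htsub (ε.symm j).2) _ (hfmem (ε.symm i))
      · intro i
        exact hQ'sub _ (h𝓟 (htsub (ε.symm i).2)) u (h𝓟u _ (htsub (ε.symm i).2))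
          (hfmem (ε.symm i))
    -- hence Hall's condition fails
    have hallfail : ∃ S : Finset {x // x ∈ t},
        (S.biUnion fun x => Q' (x : Finset V) u).card < S.card := by
      by_contra h
      push_neg at h
      exact noSDR ((Finset.all_card_le_biUnion_card_iff_exists_injective _).mp h)
    obtain ⟨S, hS⟩ := hallfail
    have hSne : S.Nonempty := by
      rcases S.eq_empty_or_nonempty with h | h
      · simp [h] at hS
      · exact h
    obtain ⟨x₀, hx₀⟩ := hSne
    have hbU : s - 1 ≤ (S.biUnion fun x => Q' (x : Finset V) u).card := by
      calc s - 1 ≤ (Q' (x₀ : Finset V) u).card := hQ'big _ x₀.2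
        _ ≤ _ := Finset.card_le_card
          (Finset.subset_biUnion_of_mem (fun (x : {x // x ∈ t}) => Q' (x : Finset V) u) hx₀)
    have hScardle : S.card ≤ s := by
      calc S.card ≤ Fintype.card {x // x ∈ t} := S.card_le_univ.trans (by simp)
        _ = s := by simp [htcard]
    have hScard : S.card = s := by omega
    have hSuniv : S = Finset.univ := Finset.eq_univ_of_card S (by simp [hScard, htcard])
    -- each Q' equals the big union
    have hkey : ∀ x : {x // x ∈ t}, Q' (x : Finset V) u =
        S.biUnion fun x => Q' (x : Finset V) u := by
      intro x
      refine Finset.eq_of_subset_of_card_le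
        (Finset.subset_biUnion_of_mem (fun (x : {x // x ∈ t}) => Q' (x : Finset V) u)
          (hSuniv ▸ Finset.mem_univ x)) ?_
      calc (S.biUnion fun x => Q' (x : Finset V) u).card ≤ s - 1 := by omega
        _ ≤ (Q' (x : Finset V) u).card := hQ'big _ x.2
    intro P₁ h₁ P₂ h₂
    have e1 := hkey ⟨P₁, h₁⟩
    have e2 := hkey ⟨P₂, h₂⟩
    refine ⟨e1.trans e2.symm, ?_⟩
    have := hQ'big P₁ h₁
    have h2 : (Q' P₁ u).card ≤ s - 1 := by
      rw [e1]; omega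
    omega
  have h𝓟card : s ≤ 𝓟.card := by omega
  -- every pair of edges of 𝓟 lies in a subfamily of size s
  have pair : ∀ P₁ ∈ 𝓟, ∀ P₂ ∈ 𝓟, Q' P₁ u = Q' P₂ u ∧ (Q' P₁ u).card = s - 1 := by
    intro P₁ h₁ P₂ h₂
    have hsub : ({P₁, P₂} : Finset (Finset V)) ⊆ 𝓟 := by
      intro x hx
      rcases Finset.mem_insert.mp hx with h | h
      · exact h ▸ h₁
      · exact (Finset.mem_singleton.mp h) ▸ h₂
    have hc2 : ({P₁, P₂} : Finset (Finset V)).card ≤ 2 := Finset.card_insert_le _ _ |>.trans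
      (by simp)
    obtain ⟨t, hBt, htP, htc⟩ := Finset.exists_subsuperset_card_eq hsub
      (n := (s - ({P₁, P₂} : Finset (Finset V)).card) + ({P₁, P₂} : Finset (Finset V)).card) (by omega) (by omega)
    have htcard : t.card = s := by
      rw [htc]
      have : 1 ≤ ({P₁, P₂} : Finset (Finset V)).card := Finset.card_pos.mpr ⟨P₁, by simp⟩
      omega
    exact core t htP htcard P₁ (hBt (by simp)) P₂ (hBt (by simp))
  -- Q' P u = Q P u for edges of the star
  have hQ'eq : ∀ P ∈ 𝓟, Q' P u = Q P u ∧ (Q P u).card = s - 1 := by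
    intro P hP
    have hc := (pair P hP P hP).2
    have hPH := h𝓟 hP
    have hPu := h𝓟u P hP
    have hm := hQ'card P hPH u hPu
    have hQc : (Q P u).card = s - 1 := by
      rcases le_or_gt s (Q P u).card with h | h
      · rw [hm, min_eq_left h] at hc; omega
      · rw [hm, min_eq_right (le_of_lt h)] at hc; exact hc
    refine ⟨Finset.eq_of_subset_of_card_le (hQ'sub P hPH u hPu) (by omega), hQc⟩
  obtain ⟨P₀, hP₀⟩ : 𝓟.Nonempty := Finset.card_pos.mp (by omega)
  set T₀ := Q P₀ u with hT₀
  have hT₀card : T₀.card = s - 1 := (hQ'eq P₀ hP₀).2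
  have hT₀all : ∀ P ∈ 𝓟, Q P u = T₀ := by
    intro P hP
    rw [hT₀, ← (hQ'eq P hP).1, ← (hQ'eq P₀ hP₀).1]
    exact (pair P hP P₀ hP₀).1
  -- the "moreover" statement
  have moreover : ∀ T : Finset V, (T.card = s - 1 ∧ ∀ P ∈ 𝓟, Q P u = T) →
      ∀ Y ∈ H, u ∈ Y → Disjoint Y T → Q Y u = T := by
    rintro T ⟨hTc, hTall⟩ Y hY huY hYT
    have hTT₀ : T = T₀ := (hTall P₀ hP₀).symm
    -- T is disjoint from every edge of 𝓟
    have hTP : ∀ P ∈ 𝓟, ∀ z ∈ T, z ∉ P := by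
      intro P hP z hz
      have : z ∈ Q' P₀ u := by
        rw [(hQ'eq P₀ hP₀).1, hT₀all P₀ hP₀, ← hTT₀]; exact hz
      exact hsep' P₀ hP₀ P hP z this
    have hsub : Q Y u ⊆ T := by
      intro z hz
      by_contra hzT
      obtain ⟨hzY, hzH⟩ := (hQmem Y u z).mp hz
      have hzu : z ≠ u := fun h => hzY (h ▸ huY)
      set W : Finset V := insert z (Y.erase u) with hW
      -- at most r edges of 𝓟 meet W
      have huW : u ∉ W := by
        simp only [hW, Finset.mem_insert, Finset.mem_erase]
        push_neg
        exact ⟨hzu.symm, fun h => absurd rfl h⟩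
      have hWcard : W.card = r := hHcard _ hzH
      set bad := 𝓟.filter (fun P => ¬ Disjoint P W) with hbad
      have hbadcard : bad.card ≤ r := by
        by_contra hlt
        push_neg at hlt
        rw [← hWcard] at hlt
        have hmaps : ∀ P ∈ bad, (fun P => if h : (P ∩ W).Nonempty then h.choose else u) P ∈ W := by
          intro P hP
          have := (Finset.mem_filter.mp hP).2
          rw [Finset.not_disjoint_iff_nonempty_inter] at this
          simp only [dif_pos this]
          exact (Finset.mem_inter.mp this.choose_spec).2
        obtain ⟨P₁, h₁, P₂, h₂, hne, heq⟩ :=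
          Finset.exists_ne_map_eq_of_card_lt_of_maps_to hlt hmaps
        have h₁' := (Finset.mem_filter.mp h₁).2
        have h₂' := (Finset.mem_filter.mp h₂).2
        rw [Finset.not_disjoint_iff_nonempty_inter] at h₁' h₂'
        simp only [dif_pos h₁', dif_pos h₂'] at heq
        have hw1 := h₁'.choose_spec
        have hw2 := h₂'.choose_spec
        have hmem : h₁'.choose ∈ P₁ ∩ P₂ := Finset.mem_inter.mpr
          ⟨(Finset.mem_inter.mp hw1).1, heq ▸ (Finset.mem_inter.mp hw2).1⟩
        rw [hstar P₁ (Finset.mem_filter.mp h₁).1 P₂ (Finset.mem_filter.mp h₂).1 hne,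
          Finset.mem_singleton] at hmem
        exact huW (hmem ▸ (Finset.mem_inter.mp hw1).2)
      set good := 𝓟.filter (fun P => Disjoint P W) with hgood
      have hgoodcard : s - 1 ≤ good.card := by
        have := Finset.card_filter_add_card_filter_not
          (s := 𝓟) (p := fun P => Disjoint P W)
        rw [← hgood, ← hbad] at this
        omega
      obtain ⟨t', ht'sub, ht'card⟩ := Finset.exists_subset_card_eq hgoodcard
      -- enumerate t' and T
      have ε : {x // x ∈ t'} ≃ Fin (s - 1) := t'.equivFin.trans (finCongr ht'card)
      have τ : {x // x ∈ T} ≃ Fin (s - 1) := T.equivFin.trans (finCongr hTc)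
      have ht'𝓟 : ∀ x ∈ t', x ∈ 𝓟 := fun x hx => (Finset.mem_filter.mp (ht'sub hx)).1
      have ht'W : ∀ x ∈ t', Disjoint x W := fun x hx => (Finset.mem_filter.mp (ht'sub hx)).2
      -- build the bush
      refine builder
        (fun i => if h : (i : ℕ) < s - 1 then (ε.symm ⟨i, h⟩ : Finset V) else Y)
        (fun i => if h : (i : ℕ) < s - 1 then (τ.symm ⟨i, h⟩ : V) else z)
        ?_ ?_ ?_ ?_ ?_ ?_
      · intro i
        by_cases h : (i : ℕ) < s - 1
        · simp only [dif_pos h]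
          exact h𝓟 (ht'𝓟 _ (ε.symm ⟨i, h⟩).2)
        · simp only [dif_neg h]
          exact hY
      · intro i
        by_cases h : (i : ℕ) < s - 1
        · simp only [dif_pos h]
          exact h𝓟u _ (ht'𝓟 _ (ε.symm ⟨i, h⟩).2)
        · simp only [dif_neg h]
          exact huY
      · intro i j hij
        have hYer : ∀ x ∈ t', Disjoint (x.erase u) (Y.erase u) := by
          intro x hx
          refine Finset.disjoint_left.mpr fun a ha ha' => ?_
          exact (Finset.disjoint_left.mp (ht'W x hx)) (Finset.mem_of_mem_erase ha)
            (by simp only [hW, Finset.mem_insert]; exact Or.inr ha')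
        by_cases h : (i : ℕ) < s - 1
        · by_cases h' : (j : ℕ) < s - 1
          · simp only [dif_pos h, dif_pos h']
            refine herase _ (ht'𝓟 _ (ε.symm ⟨i, h⟩).2) _ (ht'𝓟 _ (ε.symm ⟨j, h'⟩).2) ?_
            intro hcon
            apply hij
            have h2 := ε.symm.injective (Subtype.ext hcon)
            rw [Fin.mk.injEq] at h2
            exact Fin.ext h2
          · simp only [dif_pos h, dif_neg h']
            exact hYer _ (ε.symm ⟨i, h⟩).2
        · by_cases h' : (j : ℕ) < s - 1
          · simp only [dif_neg h, dif_pos h']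
            exact (hYer _ (ε.symm ⟨j, h'⟩).2).symm
          · exact absurd (Fin.ext (by omega : (i : ℕ) = j)) hij
      · intro i j hij
        by_cases h : (i : ℕ) < s - 1
        · by_cases h' : (j : ℕ) < s - 1
          · simp only [dif_pos h, dif_pos h'] at hij
            have h2 := τ.symm.injective (Subtype.ext hij)
            rw [Fin.mk.injEq] at h2
            exact Fin.ext h2
          · simp only [dif_pos h, dif_neg h'] at hij
            exact absurd (hij ▸ (τ.symm ⟨i, h⟩).2) hzT
        · by_cases h' : (j : ℕ) < s - 1
          · simp only [dif_neg h, dif_pos h'] at hij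
            exact absurd (hij ▸ (τ.symm ⟨j, h'⟩).2) hzT
          · exact Fin.ext (by omega)
      · intro i j
        by_cases h : (i : ℕ) < s - 1
        · by_cases h' : (j : ℕ) < s - 1
          · simp only [dif_pos h, dif_pos h']
            exact hTP _ (ht'𝓟 _ (ε.symm ⟨j, h'⟩).2) _ (τ.symm ⟨i, h⟩).2
          · simp only [dif_pos h, dif_neg h']
            exact Finset.disjoint_left.mp hYT.symm (τ.symm ⟨i, h⟩).2
        · by_cases h' : (j : ℕ) < s - 1
          · simp only [dif_neg h, dif_pos h']
            exact fun hcon => Finset.disjoint_left.mp (ht'W _ (ε.symm ⟨j, h'⟩).2) hcon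
              (by simp [hW])
          · simp only [dif_neg h, dif_neg h']
            exact hzY
      · intro i
        by_cases h : (i : ℕ) < s - 1
        · simp only [dif_pos h]
          rw [hTall _ (ht'𝓟 _ (ε.symm ⟨i, h⟩).2)]
          exact (τ.symm ⟨i, h⟩).2
        · simp only [dif_neg h]
          exact hz
    exact Finset.eq_of_subset_of_card_le hsub (by rw [hTc]; exact hnormal Y hY u huY)
  refine ⟨⟨T₀, ⟨hT₀card, hT₀all⟩, ?_⟩, moreover⟩
  rintro T ⟨-, hT⟩
  rw [← hT P₀ hP₀]
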